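/- If T and T' are straight tableaux of the same row-convex shape D and T ≠ T', then their modified column words differ: w_T ≠ w_{T'}. Equivalently, a straight tableau of shape D is uniquely determined by its shape together with the multiset of entries in each column. -/

import Mathlib

open scoped BigOperators

/-- A cell `(row, column)` of a diagram. -/
abbrev Cell := ℕ × ℕ

/-- A shape is row-convex if its rows have no gaps. -/
def RowConvex (D : Finset Cell) : Prop :=
  ∀ r i j k : ℕ, (r, i) ∈ D → (r, k) ∈ D → i ≤ j → j ≤ k → (r, j) ∈ D

/-- Rows strictly increase left to right (negative-letter convention). -/
def RowStandard (D : Finset Cell) (T : Cell → ℕ) : Prop :=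
  ∀ r i j : ℕ, (r, i) ∈ D → (r, j) ∈ D → i < j → T (r, i) < T (r, j)

/-- A straight tableau (negative-letter case). -/
def Straight (D : Finset Cell) (T : Cell → ℕ) : Prop :=
  RowStandard D T ∧
    ∀ i j k : ℕ, (i, k) ∈ D → (j, k) ∈ D → i < j → T (j, k) < T (i, k) →
      1 ≤ k ∧ (i, k - 1) ∈ D ∧ T (j, k) < T (i, k - 1)

/-- Multiset of entries of `T` in column `k` of `D`. -/
def colEntries (D : Finset Cell) (T : Cell → ℕ) (k : ℕ) : Multiset ℕ :=
  (D.filter (fun c => c.2 = k)).val.map T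

/-- A straight tableau of a row-convex shape `D` is uniquely determined by the
multiset of its entries in each column (equivalently, by its modified column
word): two straight tableaux of shape `D` with the same column contents agree
on `D`. -/
lemma count_colEntries (D : Finset Cell) (T : Cell → ℕ) (k v : ℕ) :
    Multiset.count v (colEntries D T k) =
      (D.filter (fun c => c.2 = k ∧ T c = v)).card := by
  classical
  rw [colEntries, Multiset.count_map]
  rw [show (Finset.filter (fun c => c.2 = k ∧ T c = v) D) =
      Finset.filter (fun a => v = T a) (Finset.filter (fun c => c.2 = k) D) by
    rw [Finset.filter_filter]
    exact Finset.filter_congr fun c _ => by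
      constructor <;> exact fun h => ⟨h.1, h.2.symm⟩]
  rfl

lemma exists_mem_not_mem {A B : Finset Cell} (h : A.card = B.card)
    {a : Cell} (ha : a ∈ A) (hb : a ∉ B) : ∃ b ∈ B, b ∉ A := by
  by_contra h'
  push_neg at h'
  have hsub : B ⊆ A.erase a := fun b hbB =>
    Finset.mem_erase.2 ⟨fun e => hb (e ▸ hbB), h' b hbB⟩
  have h1 := Finset.card_le_card hsub
  rw [Finset.card_erase_of_mem ha] at h1
  have h2 : 1 ≤ A.card := Finset.card_pos.2 ⟨a, ha⟩
  omega

lemma key_contra (D : Finset Cell) (T T' : Cell → ℕ)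
    (hT : Straight D T) (hT' : Straight D T')
    (hcols : ∀ k : ℕ, colEntries D T k = colEntries D T' k)
    (k : ℕ) (agree : ∀ c ∈ D, c.2 < k → T c = T' c)
    (i : ℕ) (hi : (i, k) ∈ D) (hlt : T (i, k) < T' (i, k))
    (hmin : ∀ c ∈ D, c.2 = k → T c ≠ T' c → T (i, k) ≤ min (T c) (T' c)) :
    False := by
  classical
  set v := T (i, k) with hv
  have hcard : (D.filter (fun c => c.2 = k ∧ T c = v)).card =
      (D.filter (fun c => c.2 = k ∧ T' c = v)).card := by
    rw [← count_colEntries, ← count_colEntries, hcols k]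
  have hiA : (i, k) ∈ D.filter (fun c => c.2 = k ∧ T c = v) := by
    simp [Finset.mem_filter, hi, hv]
  have hiB : (i, k) ∉ D.filter (fun c => c.2 = k ∧ T' c = v) := by
    simp only [Finset.mem_filter]
    rintro ⟨-, -, h⟩
    omega
  obtain ⟨c', hc'B, hc'A⟩ := exists_mem_not_mem hcard hiA hiB
  simp only [Finset.mem_filter] at hc'B hc'A
  obtain ⟨hc'D, hc'col, hc'T'⟩ := hc'B
  have hTc' : T c' ≠ v := fun h => hc'A ⟨hc'D, hc'col, h⟩
  have hTc'ne : T c' ≠ T' c' := by rw [hc'T']; exact hTc'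
  have hge := hmin c' hc'D hc'col hTc'ne
  have hTc'gt : v < T c' := by
    rw [hc'T'] at hge
    exact lt_of_le_of_ne (le_trans hge (min_le_left _ _)) (Ne.symm hTc')
  set j := c'.1 with hj
  have hc'eq : c' = (j, k) := by rw [hj, ← hc'col]
  rw [hc'eq] at hc'D hc'T' hTc'gt
  have hij : i ≠ j := by
    intro h
    rw [← h] at hc'T'
    omega
  rcases lt_or_gt_of_ne hij with hij | hij
  · -- i < j : T' has an inversion at (i,k),(j,k) since T'(j,k)=v < T'(i,k)
    have hinv : T' (j, k) < T' (i, k) := by rw [hc'T']; omega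
    obtain ⟨hk1, hmem, hval⟩ := hT'.2 i j k hi hc'D hij hinv
    rw [hc'T'] at hval
    -- columns < k agree, so T (i, k-1) = T' (i, k-1) > v
    have hag := agree (i, k - 1) hmem (by omega)
    -- row standard for T : T (i, k-1) < T (i, k) = v
    have hrow := hT.1 i (k - 1) k hmem hi (by omega)
    omega
  · -- j < i : T has an inversion at (j,k),(i,k) since T(i,k)=v < T(j,k)
    obtain ⟨hk1, hmem, hval⟩ := hT.2 j i k hc'D hi hij (by omega)
    have hag := agree (j, k - 1) hmem (by omega)
    have hrow := hT'.1 j (k - 1) k hmem hc'D (by omega)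
    rw [hc'T'] at hrow
    omega

theorem straight_determined_by_column_contents
    (D : Finset Cell) (hD : RowConvex D) (T T' : Cell → ℕ)
    (hT : Straight D T) (hT' : Straight D T')
    (hcols : ∀ k : ℕ, colEntries D T k = colEntries D T' k) :
    ∀ c ∈ D, T c = T' c := by
  classical
  by_contra h
  push_neg at h
  obtain ⟨c₀, hc₀D, hc₀ne⟩ := h
  set Bad := D.filter (fun c => T c ≠ T' c) with hBad
  have hBadne : Bad.Nonempty := ⟨c₀, Finset.mem_filter.2 ⟨hc₀D, hc₀ne⟩⟩
  -- minimal column with a disagreement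
  obtain ⟨k, hk⟩ := (Bad.image Prod.snd).exists_min_image id
    (hBadne.image Prod.snd)
  obtain ⟨hkmem, hkmin⟩ := hk
  obtain ⟨c₁, hc₁Bad, hc₁col⟩ := Finset.mem_image.1 hkmem
  -- cells of Bad in column k
  set Badk := Bad.filter (fun c => c.2 = k) with hBadk
  have hBadkne : Badk.Nonempty := ⟨c₁, Finset.mem_filter.2 ⟨hc₁Bad, hc₁col⟩⟩
  obtain ⟨c, hcmem, hcmin⟩ := Badk.exists_min_image
    (fun c => min (T c) (T' c)) hBadkne
  simp only [hBadk, hBad, Finset.mem_filter] at hcmem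
  obtain ⟨⟨hcD, hcne⟩, hccol⟩ := hcmem
  have agree : ∀ c' ∈ D, c'.2 < k → T c' = T' c' := by
    intro c' hc'D hc'lt
    by_contra hne
    have : c'.2 ∈ Bad.image Prod.snd :=
      Finset.mem_image.2 ⟨c', Finset.mem_filter.2 ⟨hc'D, hne⟩, rfl⟩
    have := hkmin _ this
    simp only [id] at this
    omega
  have hmin : ∀ c' ∈ D, c'.2 = k → T c' ≠ T' c' →
      min (T c) (T' c) ≤ min (T c') (T' c') := by
    intro c' hc'D hc'col hc'ne
    exact hcmin c' (Finset.mem_filter.2 ⟨Finset.mem_filter.2 ⟨hc'D, hc'ne⟩, hc'col⟩)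
  have hceq : c = (c.1, k) := by rw [← hccol]
  rcases lt_or_gt_of_ne hcne with hlt | hlt
  · apply key_contra D T T' hT hT' hcols k agree c.1 (hceq ▸ hcD) (by rw [← hceq]; exact hlt)
    intro c' hc'D hc'col hc'ne
    have h3 := hmin c' hc'D hc'col hc'ne
    rw [← hceq]
    exact (min_eq_left hlt.le) ▸ h3
  · apply key_contra D T' T hT' hT (fun k => (hcols k).symm) k
      (fun c' h1 h2 => (agree c' h1 h2).symm) c.1 (hceq ▸ hcD)
      (by rw [← hceq]; exact hlt)
    intro c' hc'D hc'col hc'ne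
    have h3 := hmin c' hc'D hc'col (fun h => hc'ne h.symm)
    rw [← hceq, min_comm]
    exact (min_eq_right hlt.le) ▸ h3
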